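/- Let (X, d) be a metric space, let P = {p₁, …, p_n} be a finite set of n ≥ 2 points of X listed in an exact greedy permutation order with prefixes P_i = {p₁, …, p_i}, and let ε ∈ (0, 1/2]. Let q ∈ X, let t ∈ P be a nearest neighbor of q in P, and let j be an index with L := d(q, p_j) > (1+ε)·d(q, P). Set ψ = (ε/4)·L and let α be the smallest index with d(p_α, t) ≤ ψ (α exists since d(t, t) = 0). Then: (i) d(q, p_α) ≤ (1 − ε/4)·L; and (ii) if α ≥ 2, then d(p_j, p_α) ≤ (8/ε)·r_{α−1}, where r_{α−1} = d(p_α, P_{α−1}). In particular, if j < α, the pair (p_j, p_α) satisfies the edge condition d(p_j, p_α) ≤ 8·r_{α−1}/ε of the greedy-permutation graph. -/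
import Mathlib


/-- `p : Fin n → X` lists the points of a finite set in an exact greedy permutation
order (0-based indexing): the points are distinct, and for each `i`, the point `p i`
attains the maximum distance to the prefix `P_i = {p j : j < i}` among all remaining
points `p k`, `k ≥ i`. -/
def IsGreedyPerm {X : Type*} [MetricSpace X] {n : ℕ} (p : Fin n → X) : Prop :=
  Function.Injective p ∧
    ∀ i k : Fin n, (i : ℕ) ≤ (k : ℕ) →
      Metric.infDist (p k) (p '' {j : Fin n | (j : ℕ) < (i : ℕ)}) ≤
        Metric.infDist (p i) (p '' {j : Fin n | (j : ℕ) < (i : ℕ)})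

/-- **Key step of greedy routing on the greedy-permutation graph.** For an exact
greedy permutation of `n ≥ 2` points, `ε ∈ (0,1/2]`, a query `q` with nearest
neighbor `p t`, and an index `j` with `L := d(q, p_j) > (1+ε) d(q,P)`, let `α` be the
smallest index with `d(p_α, p_t) ≤ ψ := (ε/4) L`. Then (i) `d(q, p_α) ≤ (1-ε/4) L`,
and (ii) if `α ≥ 1` (0-based, i.e. `α ≥ 2` 1-based) then
`d(p_j, p_α) ≤ (8/ε) r_{α-1}` where `r_{α-1} = d(p_α, P_{α-1})`
(here `P_{α-1} = {p i : i < α}` in 0-based indexing). -/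
theorem stmt_9 {X : Type*} [MetricSpace X] (n : ℕ) (hn : 2 ≤ n)
    (p : Fin n → X) (hgp : IsGreedyPerm p)
    (ε : ℝ) (hε : ε ∈ Set.Ioc (0 : ℝ) (1 / 2))
    (q : X) (t : Fin n) (ht : dist q (p t) = Metric.infDist q (Set.range p))
    (j : Fin n) (hL : (1 + ε) * Metric.infDist q (Set.range p) < dist q (p j))
    (α : Fin n) (hα : dist (p α) (p t) ≤ ε / 4 * dist q (p j))
    (hαmin : ∀ β : Fin n, (β : ℕ) < (α : ℕ) →
      ¬(dist (p β) (p t) ≤ ε / 4 * dist q (p j))) :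
    dist q (p α) ≤ (1 - ε / 4) * dist q (p j) ∧
    (1 ≤ (α : ℕ) →
      dist (p j) (p α) ≤
        8 / ε * Metric.infDist (p α) (p '' {i : Fin n | (i : ℕ) < (α : ℕ)})) := by
  obtain ⟨hε0, hε2⟩ := hε
  set D := Metric.infDist q (Set.range p) with hD
  set L := dist q (p j) with hLdef
  have hD0 : 0 ≤ D := Metric.infDist_nonneg
  have hL0 : 0 < L := lt_of_le_of_lt (by positivity) hL
  have hDL : (1 + ε) * D < L := hL
  have hεD : 0 ≤ ε * D := mul_nonneg hε0.le hD0
  have hεεD : 0 ≤ ε * D * (1 - ε) := mul_nonneg hεD (by linarith)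
  have hkey : (1 - ε / 2) * ((1 + ε) * D) < (1 - ε / 2) * L :=
    mul_lt_mul_of_pos_left hDL (by linarith)
  have h1 : dist q (p α) ≤ (1 - ε / 4) * L := by
    have h := dist_triangle q (p t) (p α)
    rw [dist_comm (p t) (p α)] at h
    have hqt : dist q (p t) = D := ht
    nlinarith [hα]
  refine ⟨h1, fun hα1 => ?_⟩
  have hψ0 : 0 ≤ ε / 4 * L := by positivity
  have hαt : (α : ℕ) ≤ (t : ℕ) := by
    by_contra hc
    push_neg at hc
    exact hαmin t hc (by simpa using hψ0)
  set S := p '' {i : Fin n | (i : ℕ) < (α : ℕ)} with hS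
  have hSne : S.Nonempty :=
    ⟨p ⟨0, lt_of_lt_of_le (by norm_num) hn⟩, ⟨⟨0, lt_of_lt_of_le (by norm_num) hn⟩, hα1, rfl⟩⟩
  have hlb : ε / 4 * L ≤ Metric.infDist (p t) S := by
    by_contra hc
    push_neg at hc
    obtain ⟨y, ⟨β, hβ, rfl⟩, hy⟩ := (Metric.infDist_lt_iff hSne).mp hc
    rw [dist_comm] at hy
    exact hαmin β hβ hy.le
  have hgr : Metric.infDist (p t) S ≤ Metric.infDist (p α) S := hgp.2 α t hαt
  have hr : ε / 4 * L ≤ Metric.infDist (p α) S := le_trans hlb hgr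
  have htri : dist (p j) (p α) ≤ L + D + ε / 4 * L := by
    have h := dist_triangle4 (p j) q (p t) (p α)
    rw [dist_comm (p j) q, dist_comm (p t) (p α)] at h
    have hqt : dist q (p t) = D := ht
    linarith [hα]
  have h2L : dist (p j) (p α) ≤ 2 * L := by nlinarith
  have hfin : 2 * L ≤ 8 / ε * Metric.infDist (p α) S := by
    rw [div_mul_eq_mul_div, le_div_iff₀ hε0]
    nlinarith
  linarith
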